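/- Let G = ⟨x, y | x¹⁰ = e, y² = x⁵, y⁻¹xy = x⁻¹⟩ be the generalized quaternion group of order 20, H = ⟨x²⟩ (of order 5), and S = {x², x⁻², y, y⁻¹, x⁸y, (x⁸y)⁻¹, x⁶y, (x⁶y)⁻¹, x, x⁻¹, x⁵}. Then S is an inverse-closed subset of G \ {e} and H is a (2,3)-regular set in Cay(G,S). -/
import Mathlib


/-- The Cayley graph of a group `G` with connection set `S`:
`x` is adjacent to `y` iff `y * x⁻¹ ∈ S` (symmetrized; for inverse-closed `S`
not containing `1` this is the usual Cayley graph). -/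
def cayley {G : Type*} [Group G] (S : Set G) : SimpleGraph G :=
  SimpleGraph.fromRel (fun x y => y * x⁻¹ ∈ S)

/-- `C` is an `(a,b)`-regular set in `Γ`: every vertex in `C` has exactly `a`
neighbors in `C`, and every vertex outside `C` has exactly `b` neighbors in `C`. -/
def IsRegularSet {V : Type*} (Γ : SimpleGraph V) (C : Set V) (a b : ℕ) : Prop :=
  (∀ v ∈ C, (Γ.neighborSet v ∩ C).ncard = a) ∧
  (∀ v ∉ C, (Γ.neighborSet v ∩ C).ncard = b)

open QuaternionGroup

private def Sf : Finset (QuaternionGroup 5) :=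
  {a 1 ^ 2, (a 1 ^ 2)⁻¹, xa 0, (xa 0)⁻¹, a 1 ^ 8 * xa 0, (a 1 ^ 8 * xa 0)⁻¹,
    a 1 ^ 6 * xa 0, (a 1 ^ 6 * xa 0)⁻¹, a 1, (a 1)⁻¹, a 1 ^ 5}

private def Cf : Finset (QuaternionGroup 5) := {1, a 1 ^ 2, a 1 ^ 4, a 1 ^ 6, a 1 ^ 8}

private lemma hSset :
    ({a 1 ^ 2, (a 1 ^ 2)⁻¹, xa 0, (xa 0)⁻¹, a 1 ^ 8 * xa 0, (a 1 ^ 8 * xa 0)⁻¹,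
        a 1 ^ 6 * xa 0, (a 1 ^ 6 * xa 0)⁻¹, a 1, (a 1)⁻¹, a 1 ^ 5} :
      Set (QuaternionGroup 5)) = ↑Sf := by
  ext g; simp [Sf]

private lemma hCset :
    (Subgroup.zpowers ((a 1 : QuaternionGroup 5) ^ 2) : Set (QuaternionGroup 5)) = ↑Cf := by
  ext g
  simp only [SetLike.mem_coe, Subgroup.mem_zpowers_iff, Finset.coe_insert, Set.mem_insert_iff,
    Finset.coe_singleton, Set.mem_singleton_iff, Cf]
  constructor
  · rintro ⟨k, rfl⟩
    have h5 : ((a 1 : QuaternionGroup 5) ^ 2) ^ (5 : ℤ) = 1 := by decide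
    have hk : k = 5 * (k / 5) + k % 5 := (Int.mul_ediv_add_emod k 5).symm
    have h0 : (0:ℤ) ≤ k % 5 := Int.emod_nonneg k (by norm_num)
    have h1 : k % 5 < 5 := Int.emod_lt_of_pos k (by norm_num)
    rw [hk, zpow_add, zpow_mul, h5, one_zpow, one_mul]
    interval_cases h : (k % 5) <;> decide
  · rintro (rfl | rfl | rfl | rfl | rfl)
    exacts [⟨0, by decide⟩, ⟨1, by decide⟩, ⟨2, by decide⟩, ⟨3, by decide⟩, ⟨4, by decide⟩]

private lemma hnbhd (v : QuaternionGroup 5) :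
    (cayley (↑Sf : Set (QuaternionGroup 5))).neighborSet v ∩ ↑Cf =
      ↑(Cf.filter (fun g => v ≠ g ∧ (g * v⁻¹ ∈ Sf ∨ v * g⁻¹ ∈ Sf))) := by
  ext g
  simp [cayley, SimpleGraph.fromRel_adj, SimpleGraph.mem_neighborSet, and_comm, and_assoc,
    and_left_comm, or_comm]

open QuaternionGroup in
theorem stmt18 :
    ((({a 1 ^ 2, (a 1 ^ 2)⁻¹, xa 0, (xa 0)⁻¹, a 1 ^ 8 * xa 0, (a 1 ^ 8 * xa 0)⁻¹,
        a 1 ^ 6 * xa 0, (a 1 ^ 6 * xa 0)⁻¹, a 1, (a 1)⁻¹, a 1 ^ 5} :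
          Set (QuaternionGroup 5)))⁻¹ =
      ({a 1 ^ 2, (a 1 ^ 2)⁻¹, xa 0, (xa 0)⁻¹, a 1 ^ 8 * xa 0, (a 1 ^ 8 * xa 0)⁻¹,
        a 1 ^ 6 * xa 0, (a 1 ^ 6 * xa 0)⁻¹, a 1, (a 1)⁻¹, a 1 ^ 5} :
          Set (QuaternionGroup 5))) ∧
    (1 : QuaternionGroup 5) ∉
      ({a 1 ^ 2, (a 1 ^ 2)⁻¹, xa 0, (xa 0)⁻¹, a 1 ^ 8 * xa 0, (a 1 ^ 8 * xa 0)⁻¹,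
        a 1 ^ 6 * xa 0, (a 1 ^ 6 * xa 0)⁻¹, a 1, (a 1)⁻¹, a 1 ^ 5} :
          Set (QuaternionGroup 5)) ∧
    IsRegularSet
      (cayley ({a 1 ^ 2, (a 1 ^ 2)⁻¹, xa 0, (xa 0)⁻¹, a 1 ^ 8 * xa 0,
          (a 1 ^ 8 * xa 0)⁻¹, a 1 ^ 6 * xa 0, (a 1 ^ 6 * xa 0)⁻¹, a 1, (a 1)⁻¹,
          a 1 ^ 5} : Set (QuaternionGroup 5)))
      (Subgroup.zpowers ((a 1 : QuaternionGroup 5) ^ 2) : Set (QuaternionGroup 5)) 2 3 := by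
  rw [hSset, hCset]
  refine ⟨?_, ?_, ?_, ?_⟩
  · ext g; simp only [Set.mem_inv, Finset.mem_coe]; revert g; decide
  · simp only [Finset.mem_coe]; decide
  · intro v hv
    rw [hnbhd v, Set.ncard_coe_finset]
    simp only [Finset.mem_coe] at hv
    revert hv; revert v; decide
  · intro v hv
    rw [hnbhd v, Set.ncard_coe_finset]
    simp only [Finset.mem_coe] at hv
    revert hv; revert v; decide
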